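/- From the labeled-graph construction of a team: let G = (V, E) be a labeled graph as in the chase characterization, and for each vertex u define the assignment s_u on variable x by s_u(x) = the family, indexed by variables y, of sets { w ∈ V : u ∼_{xy} w }. Then s_u(x) = s_w(y) if and only if u ∼_{xy} w. -/
import Mathlib


/-- ab-connectivity in a graph with edges labeled by pairs of variables. -/
def Conn {V Var : Type*} (E : V → V → Var → Var → Prop) (u : V) (a b : Var) (w : V) : Prop :=
  (u = w ∧ a = b) ∨
    ∃ (n : ℕ) (v : ℕ → V) (x : ℕ → Var),
      E u (v 0) a (x 0) ∧ (∀ i < n, E (v i) (v (i + 1)) (x i) (x (i + 1))) ∧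
        E (v n) w (x n) b

lemma conn_refl {V Var : Type*} (E : V → V → Var → Var → Prop) (u : V) (a : Var) :
    Conn E u a a u := Or.inl ⟨rfl, rfl⟩

lemma conn_single {V Var : Type*} {E : V → V → Var → Var → Prop}
    (hE : ∀ u w a b, E u w a b → E w u b a) {u w : V} {a b : Var} (h : E u w a b) :
    Conn E u a b w := by
  refine Or.inr ⟨1, fun i => if i = 0 then w else u, fun i => if i = 0 then b else a, ?_, ?_, ?_⟩
  · simpa using h
  · intro i hi
    interval_cases i
    simpa using hE _ _ _ _ h
  · simpa using h

lemma conn_prepend {V Var : Type*} {E : V → V → Var → Var → Prop}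
    (hE : ∀ u w a b, E u w a b → E w u b a) {u v w : V} {a b c : Var}
    (h : E u v a b) (h2 : Conn E v b c w) : Conn E u a c w := by
  rcases h2 with ⟨rfl, rfl⟩ | ⟨n, vf, xf, h1, hm, h3⟩
  · exact conn_single hE h
  · refine Or.inr ⟨n + 1, fun i => if i = 0 then v else vf (i - 1),
      fun i => if i = 0 then b else xf (i - 1), by simpa using h, ?_, by simpa using h3⟩
    intro i hi
    rcases Nat.eq_zero_or_pos i with rfl | hpos
    · simpa using h1
    · have h0 : i ≠ 0 := hpos.ne'
      have h0' : i + 1 ≠ 0 := by omega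
      simp only [h0, h0', if_false]
      have : i + 1 - 1 = i - 1 + 1 := by omega
      rw [this]
      exact hm (i - 1) (by omega)

lemma conn_symm {V Var : Type*} {E : V → V → Var → Var → Prop}
    (hE : ∀ u w a b, E u w a b → E w u b a) {u w : V} {a b : Var}
    (h : Conn E u a b w) : Conn E w b a u := by
  rcases h with ⟨rfl, rfl⟩ | ⟨n, vf, xf, h1, hm, h3⟩
  · exact Or.inl ⟨rfl, rfl⟩
  · refine Or.inr ⟨n, fun i => vf (n - i), fun i => xf (n - i), ?_, ?_, ?_⟩
    · simpa using hE _ _ _ _ h3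
    · intro i hi
      show E (vf (n - i)) (vf (n - (i + 1))) (xf (n - i)) (xf (n - (i + 1)))
      have e1 : n - i = (n - (i + 1)) + 1 := by omega
      rw [e1]
      exact hE _ _ _ _ (hm _ (by omega))
    · simpa using hE _ _ _ _ h1

lemma conn_trans {V Var : Type*} {E : V → V → Var → Var → Prop}
    (hE : ∀ u w a b, E u w a b → E w u b a) {u v w : V} {a b c : Var}
    (h : Conn E u a b v) (h2 : Conn E v b c w) : Conn E u a c w := by
  rcases h with ⟨rfl, rfl⟩ | ⟨n, vf, xf, h1, hm, h3⟩
  · exact h2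
  · have key : ∀ k, k ≤ n → Conn E (vf (n - k)) (xf (n - k)) c w := by
      intro k
      induction k with
      | zero => intro _; simpa using conn_prepend hE h3 h2
      | succ k ih =>
        intro hk
        have e1 : n - (k + 1) + 1 = n - k := by omega
        have edge : E (vf (n - (k + 1))) (vf (n - k)) (xf (n - (k + 1))) (xf (n - k)) := by
          rw [← e1]; exact hm _ (by omega)
        exact conn_prepend hE edge (ih (by omega))
    have := key n le_rfl
    simp only [Nat.sub_self] at this
    exact conn_prepend hE h1 this

/-- The team constructed from a labeled graph: the assignment of vertex u maps
variable x to the family (indexed by variables y) of the sets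
{ w : u ∼_{xy} w }.  Then s_u(x) = s_w(y) iff u ∼_{xy} w. -/
theorem graph_team_values {V Var : Type*} [Fintype Var]
    (E : V → V → Var → Var → Prop) (hE : ∀ u w a b, E u w a b → E w u b a)
    (s : V → Var → (Var → Set V))
    (hs : ∀ u x, s u x = fun y => {w | Conn E u x y w}) (u w : V) (x y : Var) :
    s u x = s w y ↔ Conn E u x y w := by
  rw [hs, hs]
  constructor
  · intro h
    have : w ∈ {v | Conn E w y y v} := conn_refl E w y
    rw [← congrFun h y] at this
    exact this
  · intro h
    funext z
    ext v
    simp only [Set.mem_setOf_eq]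
    exact ⟨fun hv => conn_trans hE (conn_symm hE h) hv, fun hv => conn_trans hE h hv⟩
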